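/- Let G be an r-regular simple graph with n vertices and m edges, where r ≥ 2 (so that m ≥ n), and let q_1 ≤ q_2 ≤ … ≤ q_n = 2r be the eigenvalues of Q(G) listed with multiplicity. Then f(λ, G^{11-}) = [(λ-2n-2m+2)(λ-n-m+r+4) + 8m]·(λ-n-m+4)^{m-n}·∏_{i=1}^{n-1}[(λ-m-n+r+2)(λ-n-m+4) - q_i]. -/

import Mathlib

open Classical

/-- The four symbols `0, 1, +, -` used in `xyz`-transformations. -/
inductive XYZ : Type
  | zero | one | plus | minus

namespace XYZ

/-- The relation on the vertices of a graph `H` given by a symbol: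
`0` gives the empty graph, `1` the complete graph, `+` the graph itself,
`-` its complement. -/
def rel {W : Type*} (H : SimpleGraph W) : XYZ → W → W → Prop
  | .zero => fun _ _ => False
  | .one  => fun u v => u ≠ v
  | .plus => fun u v => H.Adj u v
  | .minus => fun u v => u ≠ v ∧ ¬ H.Adj u v

/-- The incidence relation between a vertex and an edge given by a symbol `z`:
`+` means incident, `-` means non-incident, `0` never, `1` always. -/
def inc {W : Type*} (G : SimpleGraph W) : XYZ → W → G.edgeSet → Prop
  | .zero => fun _ _ => False
  | .one  => fun _ _ => True
  | .plus => fun v e => v ∈ (e : Sym2 W)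
  | .minus => fun v e => v ∉ (e : Sym2 W)

theorem rel_symm {W : Type*} (H : SimpleGraph W) (x : XYZ) {u v : W}
    (h : rel H x u v) : rel H x v u := by
  cases x with
  | zero => exact h.elim
  | one => exact (h : u ≠ v).symm
  | plus => exact H.adj_symm h
  | minus => exact ⟨(h.1).symm, fun h' => h.2 (H.adj_symm h')⟩

theorem rel_irrefl {W : Type*} (H : SimpleGraph W) (x : XYZ) {u : W}
    (h : rel H x u u) : False := by
  cases x with
  | zero => exact h
  | one => exact h rfl
  | plus => exact H.irrefl h
  | minus => exact h.1 rfl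

end XYZ

/-- The `xyz`-transformation `G^{xyz}` of a graph `G`: its vertex set is
`V(G) ⊕ E(G)`; two vertices of `G` are adjacent according to the symbol `x`
(applied to `G`), two edges according to the symbol `y` (applied to the line
graph of `G`), and a vertex and an edge according to the symbol `z`
(`+` = incidence graph `B(G)`, `-` = non-incidence graph `B^c(G)`,
`0` = no vertex-edge edges, `1` = all vertex-edge edges). -/
def xyzTransform {V : Type*} (G : SimpleGraph V) (x y z : XYZ) :
    SimpleGraph (V ⊕ G.edgeSet) where
  Adj a b :=
    match a, b with
    | Sum.inl u, Sum.inl v => XYZ.rel G x u v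
    | Sum.inr e, Sum.inr f => XYZ.rel G.lineGraph y e f
    | Sum.inl v, Sum.inr e => XYZ.inc G z v e
    | Sum.inr e, Sum.inl v => XYZ.inc G z v e
  symm := by
    refine ⟨?_⟩
    rintro (u | e) (v | f) h
    · exact XYZ.rel_symm G x h
    · exact h
    · exact h
    · exact XYZ.rel_symm G.lineGraph y h
  loopless := by
    refine ⟨?_⟩
    rintro (u | e) h
    · exact XYZ.rel_irrefl G x h
    · exact XYZ.rel_irrefl G.lineGraph y h

/-- The signless Laplacian matrix `Q(G) = D(G) + A(G)` of a graph. -/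
noncomputable def signlessLaplacian {V : Type*} [Fintype V] (G : SimpleGraph V) :
    Matrix V V ℝ :=
  Matrix.of fun u v =>
    (if u = v then (G.degree u : ℝ) else 0) + (if G.Adj u v then 1 else 0)

/-- The signless Laplacian characteristic polynomial
`f(λ, G) = det (λ I - Q(G))`, evaluated at a real number `λ`. -/
noncomputable def fQ {V : Type*} [Fintype V] (G : SimpleGraph V) (lam : ℝ) : ℝ :=
  Matrix.det (lam • (1 : Matrix V V ℝ) - signlessLaplacian G)

open Classical Matrix Finset Polynomial

namespace SCXYZ

variable {V : Type*} [Fintype V] (G : SimpleGraph V)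

lemma adj_inl_inl {u v : V} :
    (xyzTransform G .one .one .minus).Adj (Sum.inl u) (Sum.inl v) ↔ u ≠ v := Iff.rfl

lemma adj_inr_inr {e f : G.edgeSet} :
    (xyzTransform G .one .one .minus).Adj (Sum.inr e) (Sum.inr f) ↔ e ≠ f := Iff.rfl

lemma adj_inl_inr {v : V} {e : G.edgeSet} :
    (xyzTransform G .one .one .minus).Adj (Sum.inl v) (Sum.inr e) ↔ v ∉ (e : Sym2 V) := Iff.rfl

lemma adj_inr_inl {v : V} {e : G.edgeSet} :
    (xyzTransform G .one .one .minus).Adj (Sum.inr e) (Sum.inl v) ↔ v ∉ (e : Sym2 V) := Iff.rfl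


noncomputable def incB (G : SimpleGraph V) : Matrix V G.edgeSet ℝ :=
  Matrix.of fun v e => if v ∈ (e : Sym2 V) then 1 else 0

/-- see p1 -/
lemma card_filter_mem [Fintype G.edgeSet] (v : V) :
    (univ.filter fun e : G.edgeSet => v ∈ (e : Sym2 V)).card = G.degree v := by
  classical
  rw [← Fintype.card_subtype, ← SimpleGraph.card_incidenceSet_eq_degree G v]
  apply Fintype.card_congr
  exact {
    toFun := fun e => ⟨e.1.1, e.1.2, e.2⟩
    invFun := fun e => ⟨⟨e.1, e.2.1⟩, e.2.2⟩
    left_inv := fun e => rfl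
    right_inv := fun e => rfl }

lemma card_filter_vmem (e : G.edgeSet) :
    (univ.filter fun u : V => u ∈ (e : Sym2 V)).card = 2 := by
  classical
  obtain ⟨e, he⟩ := e
  induction e using Sym2.ind with
  | _ a b =>
    have hab : a ≠ b := (G.mem_edgeSet.mp he).ne
    rw [show (univ.filter fun u : V => u ∈ (s(a,b) : Sym2 V)) = {a, b} from ?_]
    · exact Finset.card_pair hab
    · ext u; simp [Sym2.mem_iff]

lemma degree_inl [Fintype G.edgeSet] {r : ℕ} (hreg : G.IsRegularOfDegree r) (v : V) :
    (xyzTransform G .one .one .minus).degree (Sum.inl v) + (r + 1)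
      = Fintype.card V + Fintype.card G.edgeSet := by
  classical
  rw [← SimpleGraph.card_neighborSet_eq_degree]
  have e1 : ↥((xyzTransform G .one .one .minus).neighborSet (Sum.inl v))
      ≃ ({u : V // (xyzTransform G .one .one .minus).Adj (Sum.inl v) (Sum.inl u)}
        ⊕ {e : G.edgeSet // (xyzTransform G .one .one .minus).Adj (Sum.inl v) (Sum.inr e)}) :=
    Equiv.subtypeSum
  rw [Fintype.card_congr e1, Fintype.card_sum]
  have h1 : Fintype.card {u : V // (xyzTransform G .one .one .minus).Adj (Sum.inl v) (Sum.inl u)}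
      + 1 = Fintype.card V := by
    rw [Fintype.card_subtype]
    have : (univ.filter fun u : V => (xyzTransform G .one .one .minus).Adj (Sum.inl v) (Sum.inl u))
        = univ.erase v := by
      ext u
      simp [adj_inl_inl, ne_comm, eq_comm]
    rw [this, Finset.card_erase_add_one (Finset.mem_univ v), Finset.card_univ]
  have h2 : G.degree v
      + Fintype.card {e : G.edgeSet // (xyzTransform G .one .one .minus).Adj (Sum.inl v) (Sum.inr e)}
      = Fintype.card G.edgeSet := by
    rw [Fintype.card_subtype, ← card_filter_mem G v]
    rw [show (univ.filter fun e : G.edgeSet => (xyzTransform G .one .one .minus).Adj (Sum.inl v) (Sum.inr e))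
        = univ.filter fun e : G.edgeSet => ¬ v ∈ (e : Sym2 V) from by
      apply Finset.filter_congr; intro e _; exact adj_inl_inr G]
    rw [← Finset.card_univ]
    exact Finset.card_filter_add_card_filter_not _
  rw [hreg v] at h2
  omega

lemma degree_inr [Fintype G.edgeSet] (e : G.edgeSet) :
    (xyzTransform G .one .one .minus).degree (Sum.inr e) + 3
      = Fintype.card V + Fintype.card G.edgeSet := by
  classical
  rw [← SimpleGraph.card_neighborSet_eq_degree]
  have e1 : ↥((xyzTransform G .one .one .minus).neighborSet (Sum.inr e))
      ≃ ({u : V // (xyzTransform G .one .one .minus).Adj (Sum.inr e) (Sum.inl u)}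
        ⊕ {f : G.edgeSet // (xyzTransform G .one .one .minus).Adj (Sum.inr e) (Sum.inr f)}) :=
    Equiv.subtypeSum
  rw [Fintype.card_congr e1, Fintype.card_sum]
  have h1 : 2 + Fintype.card {u : V // (xyzTransform G .one .one .minus).Adj (Sum.inr e) (Sum.inl u)}
      = Fintype.card V := by
    rw [Fintype.card_subtype, ← card_filter_vmem G e]
    rw [show (univ.filter fun u : V => (xyzTransform G .one .one .minus).Adj (Sum.inr e) (Sum.inl u))
        = univ.filter fun u : V => ¬ u ∈ (e : Sym2 V) from by
      apply Finset.filter_congr; intro u _; exact adj_inr_inl G]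
    rw [← Finset.card_univ]
    exact Finset.card_filter_add_card_filter_not _
  have h2 : Fintype.card {f : G.edgeSet // (xyzTransform G .one .one .minus).Adj (Sum.inr e) (Sum.inr f)}
      + 1 = Fintype.card G.edgeSet := by
    rw [Fintype.card_subtype]
    have : (univ.filter fun f : G.edgeSet => (xyzTransform G .one .one .minus).Adj (Sum.inr e) (Sum.inr f))
        = univ.erase e := by
      ext f
      simp [adj_inr_inr, ne_comm, eq_comm]
    rw [this, Finset.card_erase_add_one (Finset.mem_univ e), Finset.card_univ]
  omega

lemma card_filter_mem_mem [Fintype G.edgeSet] {u v : V} (huv : u ≠ v) :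
    ((univ.filter fun e : G.edgeSet => u ∈ (e : Sym2 V) ∧ v ∈ (e : Sym2 V)).card : ℝ)
      = if G.Adj u v then 1 else 0 := by
  classical
  by_cases h : G.Adj u v
  · rw [if_pos h]
    norm_cast
    rw [show (univ.filter fun e : G.edgeSet => u ∈ (e : Sym2 V) ∧ v ∈ (e : Sym2 V))
        = {⟨s(u,v), G.mem_edgeSet.mpr h⟩} from ?_, Finset.card_singleton]
    ext e
    simp only [Finset.mem_filter, Finset.mem_univ, true_and, Finset.mem_singleton]
    rw [Sym2.mem_and_mem_iff huv]
    exact ⟨fun h' => Subtype.ext h', fun h' => by rw [h']⟩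
  · rw [if_neg h]
    norm_cast
    rw [Finset.card_eq_zero]
    ext e
    simp only [Finset.mem_filter, Finset.mem_univ, true_and, Finset.notMem_empty, iff_false]
    rintro ⟨hu, hv⟩
    exact h (G.mem_edgeSet.mp (((Sym2.mem_and_mem_iff huv).mp ⟨hu, hv⟩) ▸ e.2))


lemma incB_mul_transpose [Fintype G.edgeSet] :
    incB G * (incB G)ᵀ = signlessLaplacian G := by
  classical
  ext u v
  simp only [Matrix.mul_apply, incB, Matrix.transpose_apply, Matrix.of_apply,
    signlessLaplacian, ite_mul, one_mul, zero_mul]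
  have : ∀ e : G.edgeSet, (if u ∈ (e : Sym2 V) then if v ∈ (e : Sym2 V) then (1:ℝ) else 0 else 0)
      = if u ∈ (e : Sym2 V) ∧ v ∈ (e : Sym2 V) then (1:ℝ) else 0 := by
    intro e; by_cases h1 : u ∈ (e : Sym2 V) <;> by_cases h2 : v ∈ (e : Sym2 V) <;> simp [h1, h2]
  rw [Finset.sum_congr rfl fun e _ => this e, Finset.sum_boole]
  by_cases huv : u = v
  · subst huv
    rw [if_pos rfl, if_neg (G.irrefl), add_zero]
    norm_cast
    rw [← card_filter_mem G u]
    congr 1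
    apply Finset.filter_congr
    intro e _
    simp
  · rw [if_neg huv, zero_add]
    exact card_filter_mem_mem G huv


end SCXYZ

namespace SCXYZ

variable {V : Type*} [Fintype V] (G : SimpleGraph V)

lemma incB_mulVec_const [Fintype G.edgeSet] {r : ℕ} (hreg : G.IsRegularOfDegree r) (c : ℝ) :
    incB G *ᵥ (fun _ => c) = fun _ => (r : ℝ) * c := by
  funext v
  simp only [Matrix.mulVec, dotProduct, incB, Matrix.of_apply, ite_mul, one_mul, zero_mul]
  rw [Finset.sum_ite, Finset.sum_const, Finset.sum_const_zero, add_zero, card_filter_mem G v,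
    hreg v, nsmul_eq_mul]

lemma incBT_mulVec_const [Fintype G.edgeSet] (c : ℝ) :
    (incB G)ᵀ *ᵥ (fun _ => c) = fun _ => (2 : ℝ) * c := by
  funext e
  simp only [Matrix.mulVec, dotProduct, incB, Matrix.transpose_apply, Matrix.of_apply,
    ite_mul, one_mul, zero_mul]
  rw [Finset.sum_ite, Finset.sum_const, Finset.sum_const_zero, add_zero, card_filter_vmem G e,
    nsmul_eq_mul]
  norm_num

lemma block_eq [Fintype G.edgeSet] {r n m : ℕ} (hreg : G.IsRegularOfDegree r)
    (hn : Fintype.card V = n) (hm : Fintype.card G.edgeSet = m) (lam : ℝ) :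
    fQ (xyzTransform G .one .one .minus) lam
      = Matrix.det (Matrix.fromBlocks ((lam - n - m + r + 2) • (1 : Matrix V V ℝ)) (incB G)
          (incB G)ᵀ ((lam - n - m + 4) • (1 : Matrix G.edgeSet G.edgeSet ℝ))
        - Matrix.of (fun _ _ => (1:ℝ))) := by
  classical
  unfold fQ
  congr 1
  have hdl : ∀ v : V, (((xyzTransform G .one .one .minus).degree (Sum.inl v) : ℝ))
      = n + m - r - 1 := by
    intro v
    have h := degree_inl G hreg v
    rw [hn, hm] at h
    have h2 := congrArg (Nat.cast : ℕ → ℝ) h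
    push_cast at h2
    linarith
  have hdr : ∀ e : G.edgeSet, (((xyzTransform G .one .one .minus).degree (Sum.inr e) : ℝ))
      = n + m - 3 := by
    intro e
    have h := degree_inr G e
    rw [hn, hm] at h
    have h2 := congrArg (Nat.cast : ℕ → ℝ) h
    push_cast at h2
    linarith
  ext i j
  rcases i with u | e <;> rcases j with v | f
  · rcases eq_or_ne u v with h | h
    · subst h
      have hadj : ¬ (xyzTransform G .one .one .minus).Adj (Sum.inl u) (Sum.inl u) :=
        (xyzTransform G .one .one .minus).irrefl
      simp only [Matrix.sub_apply, Matrix.smul_apply, Matrix.one_apply_eq, smul_eq_mul, mul_one,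
        signlessLaplacian, Matrix.of_apply, Matrix.fromBlocks_apply₁₁, if_pos rfl, if_neg hadj,
        add_zero, hdl u, if_true]
      try ring
    · have hadj : (xyzTransform G .one .one .minus).Adj (Sum.inl u) (Sum.inl v) := h
      have hne : (Sum.inl u : V ⊕ G.edgeSet) ≠ Sum.inl v := by simp [h]
      simp only [Matrix.sub_apply, Matrix.smul_apply, Matrix.one_apply, smul_eq_mul,
        signlessLaplacian, Matrix.of_apply, Matrix.fromBlocks_apply₁₁, if_neg h, if_neg hne,
        if_pos hadj, mul_zero, zero_add, zero_sub]
      try ring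
  · have hne : (Sum.inl u : V ⊕ G.edgeSet) ≠ Sum.inr f := by simp
    rcases Classical.em (u ∈ (f : Sym2 V)) with h | h
    · have hadj : ¬ (xyzTransform G .one .one .minus).Adj (Sum.inl u) (Sum.inr f) :=
        fun h' => ((adj_inl_inr G).mp h') h
      simp only [Matrix.sub_apply, Matrix.smul_apply, Matrix.one_apply, smul_eq_mul,
        signlessLaplacian, Matrix.of_apply, Matrix.fromBlocks_apply₁₂, incB, if_neg hne,
        if_neg hadj, if_pos h, mul_zero, zero_add, zero_sub, add_zero]
      try ring
    · have hadj : (xyzTransform G .one .one .minus).Adj (Sum.inl u) (Sum.inr f) :=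
        (adj_inl_inr G).mpr h
      simp only [Matrix.sub_apply, Matrix.smul_apply, Matrix.one_apply, smul_eq_mul,
        signlessLaplacian, Matrix.of_apply, Matrix.fromBlocks_apply₁₂, incB, if_neg hne,
        if_pos hadj, if_neg h, mul_zero, zero_add, zero_sub]
      try ring
  · have hne : (Sum.inr e : V ⊕ G.edgeSet) ≠ Sum.inl v := by simp
    rcases Classical.em (v ∈ (e : Sym2 V)) with h | h
    · have hadj : ¬ (xyzTransform G .one .one .minus).Adj (Sum.inr e) (Sum.inl v) :=
        fun h' => ((adj_inr_inl G).mp h') h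
      simp only [Matrix.sub_apply, Matrix.smul_apply, Matrix.one_apply, smul_eq_mul,
        signlessLaplacian, Matrix.of_apply, Matrix.fromBlocks_apply₂₁, incB,
        Matrix.transpose_apply, if_neg hne, if_neg hadj, if_pos h, mul_zero, zero_add,
        zero_sub, add_zero]
      try ring
    · have hadj : (xyzTransform G .one .one .minus).Adj (Sum.inr e) (Sum.inl v) :=
        (adj_inr_inl G).mpr h
      simp only [Matrix.sub_apply, Matrix.smul_apply, Matrix.one_apply, smul_eq_mul,
        signlessLaplacian, Matrix.of_apply, Matrix.fromBlocks_apply₂₁, incB,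
        Matrix.transpose_apply, if_neg hne, if_pos hadj, if_neg h, mul_zero, zero_add, zero_sub]
      try ring
  · rcases eq_or_ne e f with h | h
    · subst h
      have hadj : ¬ (xyzTransform G .one .one .minus).Adj (Sum.inr e) (Sum.inr e) :=
        (xyzTransform G .one .one .minus).irrefl
      simp only [Matrix.sub_apply, Matrix.smul_apply, Matrix.one_apply_eq, smul_eq_mul, mul_one,
        signlessLaplacian, Matrix.of_apply, Matrix.fromBlocks_apply₂₂, if_pos rfl, if_neg hadj,
        add_zero, hdr e, if_true]
      try ring
    · have hadj : (xyzTransform G .one .one .minus).Adj (Sum.inr e) (Sum.inr f) := h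
      have hne : (Sum.inr e : V ⊕ G.edgeSet) ≠ Sum.inr f := by simp [h]
      simp only [Matrix.sub_apply, Matrix.smul_apply, Matrix.one_apply, smul_eq_mul,
        signlessLaplacian, Matrix.of_apply, Matrix.fromBlocks_apply₂₂, if_neg h, if_neg hne,
        if_pos hadj, mul_zero, zero_add, zero_sub]
      try ring

end SCXYZ

namespace SCXYZ

lemma det_swap_rect {W E : Type*} [Fintype W] [Fintype E] [DecidableEq W] [DecidableEq E]
    (B : Matrix W E ℝ) {x : ℝ} (hx : x ≠ 0) :
    x ^ (Fintype.card W) * (x • (1 : Matrix E E ℝ) - Bᵀ * B).det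
      = x ^ (Fintype.card E) * (x • (1 : Matrix W W ℝ) - B * Bᵀ).det := by
  haveI : Invertible (x • (1 : Matrix W W ℝ)) := by
    apply Matrix.invertibleOfIsUnitDet
    rw [Matrix.det_smul, Matrix.det_one, mul_one]
    exact isUnit_iff_ne_zero.mpr (pow_ne_zero _ hx)
  have hinv : (⅟(x • (1 : Matrix W W ℝ))) = x⁻¹ • (1 : Matrix W W ℝ) := by
    apply invOf_eq_right_inv
    rw [Matrix.smul_mul, Matrix.one_mul, smul_smul, mul_inv_cancel₀ hx, one_smul]
  have hF1 : (Matrix.fromBlocks (x • (1 : Matrix W W ℝ)) B Bᵀ (1 : Matrix E E ℝ)).det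
      = x ^ (Fintype.card W) * ((1 : Matrix E E ℝ) - x⁻¹ • (Bᵀ * B)).det := by
    rw [Matrix.det_fromBlocks₁₁, hinv, Matrix.det_smul, Matrix.det_one, mul_one]
    congr 2
    rw [Matrix.mul_smul, Matrix.mul_one, Matrix.smul_mul]
  have hF2 : (Matrix.fromBlocks (x • (1 : Matrix W W ℝ)) B Bᵀ (1 : Matrix E E ℝ)).det
      = (x • (1 : Matrix W W ℝ) - B * Bᵀ).det := Matrix.det_fromBlocks_one₂₂ _ _ _
  have hsm : x • (1 : Matrix E E ℝ) - Bᵀ * B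
      = x • ((1 : Matrix E E ℝ) - x⁻¹ • (Bᵀ * B)) := by
    rw [smul_sub, smul_smul, mul_inv_cancel₀ hx, one_smul]
  rw [hsm, Matrix.det_smul, ← hF2, hF1]
  ring

set_option maxHeartbeats 2000000 in
lemma main_good {V : Type*} [Fintype V] (G : SimpleGraph V) [Fintype G.edgeSet]
    (r n m : ℕ)
    (hn : Fintype.card V = n) (hm : Fintype.card G.edgeSet = m)
    (hreg : G.IsRegularOfDegree r) (hmn : n ≤ m) (h2m : (n : ℝ) * r = 2 * m) (hn0 : 0 < n)
    (q : Fin n → ℝ) (hq2r : ∀ i, q i ≤ 2 * r)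
    (hqlast : q ⟨n - 1, Nat.sub_lt hn0 Nat.one_pos⟩ = 2 * r)
    (hq : ∀ x : ℝ, fQ G x = ∏ i : Fin n, (x - q i))
    (lam : ℝ) (hlam : (n : ℝ) + m + 2 * r + 1 ≤ lam) :
    fQ (xyzTransform G XYZ.one XYZ.one XYZ.minus) lam =
      ((lam - 2 * n - 2 * m + 2) * (lam - n - m + r + 4) + 8 * m) *
        (lam - n - m + 4) ^ (m - n) *
        ∏ i : Fin (n - 1),
          ((lam - m - n + r + 2) * (lam - n - m + 4) - q (Fin.castLE (Nat.sub_le n 1) i)) := by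
  classical
  have hr0 : (0:ℝ) ≤ r := Nat.cast_nonneg r
  set α : ℝ := lam - n - m + r + 2 with hα_def
  set β : ℝ := lam - n - m + 4 with hβ_def
  have hα1 : 1 ≤ α := by rw [hα_def]; linarith
  have hβ1 : 2 * r + 5 ≤ β := by rw [hβ_def]; linarith
  have hX1 : ∀ i : Fin n, q i + 1 ≤ α * β := by
    intro i
    have h1 := hq2r i
    nlinarith
  have hα0 : α ≠ 0 := by linarith
  have hβ0 : (0:ℝ) < β := by linarith
  have hX0 : α * β ≠ 0 := by nlinarith
  have hδ1 : 2 * r + 1 ≤ α * β := by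
    have := hX1 ⟨n - 1, by omega⟩
    rw [hqlast] at this
    linarith
  set δ : ℝ := α * β - 2 * r with hδ_def
  have hδ0 : δ ≠ 0 := by rw [hδ_def]; linarith
  set P : ℝ := ∏ i : Fin n, (α * β - q i) with hP_def
  have hPpos : 0 < P := by
    rw [hP_def]
    apply Finset.prod_pos
    intro i _
    have := hX1 i
    linarith
  set B := incB G with hB_def
  set M₀ : Matrix (V ⊕ G.edgeSet) (V ⊕ G.edgeSet) ℝ :=
    Matrix.fromBlocks (α • (1 : Matrix V V ℝ)) B Bᵀ (β • (1 : Matrix G.edgeSet G.edgeSet ℝ))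
    with hM₀_def
  haveI : Invertible (α • (1 : Matrix V V ℝ)) := by
    apply Matrix.invertibleOfIsUnitDet
    rw [Matrix.det_smul, Matrix.det_one, mul_one]
    exact isUnit_iff_ne_zero.mpr (pow_ne_zero _ hα0)
  have hinvof : (⅟(α • (1 : Matrix V V ℝ))) = α⁻¹ • (1 : Matrix V V ℝ) := by
    apply invOf_eq_right_inv
    rw [Matrix.smul_mul, Matrix.one_mul, smul_smul, mul_inv_cancel₀ hα0, one_smul]
  have hdS : M₀.det = α ^ n *
      (β • (1 : Matrix G.edgeSet G.edgeSet ℝ) - α⁻¹ • (Bᵀ * B)).det := by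
    rw [hM₀_def, Matrix.det_fromBlocks₁₁, hinvof, Matrix.det_smul, Matrix.det_one, mul_one, hn]
    congr 2
    rw [Matrix.mul_smul, Matrix.mul_one, Matrix.smul_mul]
  have hαm : α ^ m * (β • (1 : Matrix G.edgeSet G.edgeSet ℝ) - α⁻¹ • (Bᵀ * B)).det
      = ((α * β) • (1 : Matrix G.edgeSet G.edgeSet ℝ) - Bᵀ * B).det := by
    rw [← hm, ← Matrix.det_smul]
    congr 1
    rw [smul_sub, smul_smul, smul_smul, mul_inv_cancel₀ hα0, one_smul]
  have hBBt : B * Bᵀ = signlessLaplacian G := by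
    rw [hB_def]; exact incB_mul_transpose G
  have hswap := det_swap_rect B (x := α * β) hX0
  rw [hn, hm, hBBt] at hswap
  have hfQ : ((α * β) • (1 : Matrix V V ℝ) - signlessLaplacian G).det = P := by
    rw [show ((α * β) • (1 : Matrix V V ℝ) - signlessLaplacian G).det = fQ G (α * β) from rfl,
      hq, hP_def]
  have hdetM₀ : M₀.det = β ^ (m - n) * P := by
    apply mul_right_cancel₀ (b := α ^ m * (α * β) ^ n)
      (mul_ne_zero (pow_ne_zero _ hα0) (pow_ne_zero _ hX0))
    calc M₀.det * (α ^ m * (α * β) ^ n)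
        = (α * β) ^ n * (α ^ m *
            (β • (1 : Matrix G.edgeSet G.edgeSet ℝ) - α⁻¹ • (Bᵀ * B)).det) * α ^ n := by
          rw [hdS]; ring
      _ = (α * β) ^ n * ((α * β) • (1 : Matrix G.edgeSet G.edgeSet ℝ) - Bᵀ * B).det * α ^ n := by
          rw [hαm]
      _ = ((α * β) ^ m * P) * α ^ n := by rw [hswap, hfQ]
      _ = β ^ (m - n) * P * (α ^ m * (α * β) ^ n) := by
          rw [mul_pow, mul_pow, show β ^ m = β ^ (m - n) * β ^ n from by
            rw [← pow_add, Nat.sub_add_cancel hmn]]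
          ring
  have hdetM₀0 : IsUnit M₀.det := by
    rw [hdetM₀]
    exact isUnit_iff_ne_zero.mpr (ne_of_gt (mul_pos (pow_pos hβ0 _) hPpos))
  have hM₀T : M₀ᵀ = M₀ := by
    rw [hM₀_def, Matrix.fromBlocks_transpose, Matrix.transpose_smul, Matrix.transpose_one,
      Matrix.transpose_transpose, Matrix.transpose_smul, Matrix.transpose_one]
  set s₁ : ℝ := (β - r) / δ with hs₁
  set s₂ : ℝ := (α - 2) / δ with hs₂
  set u : V ⊕ G.edgeSet → ℝ := Sum.elim (fun _ => s₁) (fun _ => s₂) with hu_def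
  have hMu : M₀ *ᵥ u = fun _ => (1:ℝ) := by
    rw [hM₀_def, hu_def, Matrix.fromBlocks_mulVec]
    have hc1 : (Sum.elim (fun _ : V => s₁) (fun _ : G.edgeSet => s₂)) ∘ Sum.inl
        = fun _ : V => s₁ := rfl
    have hc2 : (Sum.elim (fun _ : V => s₁) (fun _ : G.edgeSet => s₂)) ∘ Sum.inr
        = fun _ : G.edgeSet => s₂ := rfl
    rw [hc1, hc2, Matrix.smul_mulVec, Matrix.one_mulVec, Matrix.smul_mulVec,
      Matrix.one_mulVec, hB_def, incB_mulVec_const G hreg, incBT_mulVec_const G]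
    funext w
    rcases w with v | e
    · simp only [Sum.elim_inl, Pi.add_apply, Pi.smul_apply, smul_eq_mul]
      rw [hs₁, hs₂]
      field_simp
      rw [hδ_def]
      ring
    · simp only [Sum.elim_inr, Pi.add_apply, Pi.smul_apply, smul_eq_mul]
      rw [hs₁, hs₂]
      field_simp
      rw [hδ_def]
      ring
  have huinv : M₀⁻¹ *ᵥ (fun _ => (1:ℝ)) = u := by
    rw [← hMu, Matrix.mulVec_mulVec, Matrix.nonsing_inv_mul _ hdetM₀0, Matrix.one_mulVec]
  have hvec : (fun _ => (1:ℝ)) ᵥ* M₀⁻¹ = u := by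
    have hsymm : (M₀⁻¹)ᵀ = M₀⁻¹ := by rw [Matrix.transpose_nonsing_inv, hM₀T]
    rw [← hsymm, Matrix.vecMul_transpose, huinv]
  have hblock := block_eq G hreg hn hm lam
  rw [← hα_def, ← hβ_def, ← hB_def, ← hM₀_def] at hblock
  have hrank1 : M₀ - Matrix.of (fun _ _ => (1:ℝ))
      = M₀ + Matrix.replicateCol Unit (fun _ => (-1:ℝ)) * Matrix.replicateRow Unit (fun _ => (1:ℝ)) := by
    ext i j
    simp only [Matrix.sub_apply, Matrix.add_apply, Matrix.of_apply, Matrix.mul_apply,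
      Matrix.replicateCol_apply, Matrix.replicateRow_apply, Finset.univ_unique, Finset.sum_const,
      Finset.card_singleton, one_smul]
    ring
  have hdot : u ⬝ᵥ (fun _ => (-1:ℝ)) = -((n:ℝ) * s₁ + (m:ℝ) * s₂) := by
    simp only [dotProduct, hu_def, Fintype.sum_sum_type, Sum.elim_inl, Sum.elim_inr,
      Finset.sum_const, Finset.card_univ, hn, hm, nsmul_eq_mul]
    ring
  have hdetM : fQ (xyzTransform G XYZ.one XYZ.one XYZ.minus) lam
      = M₀.det * (1 - ((n:ℝ) * s₁ + (m:ℝ) * s₂)) := by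
    rw [hblock, hrank1, Matrix.det_add_replicateCol_mul_replicateRow (ι := Unit) hdetM₀0, Matrix.det_unique (n := Unit)]
    congr 1
    rw [Matrix.add_apply, Matrix.one_apply_eq, ← Matrix.replicateRow_vecMul, hvec,
      Matrix.replicateRow_mul_replicateCol_apply, hdot]
    ring
  have hkn : n - 1 + 1 = n := by omega
  have hsplit : P = (∏ i : Fin (n - 1), (α * β - q (Fin.castLE (Nat.sub_le n 1) i))) * δ := by
    rw [hP_def]
    calc ∏ i : Fin n, (α * β - q i)
        = ∏ j : Fin (n - 1 + 1), (α * β - q (finCongr hkn j)) :=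
          (Fintype.prod_equiv (finCongr hkn) _ _ (fun j => rfl)).symm
      _ = (∏ j : Fin (n - 1), (α * β - q (finCongr hkn j.castSucc)))
            * (α * β - q (finCongr hkn (Fin.last (n - 1)))) := Fin.prod_univ_castSucc _
      _ = (∏ i : Fin (n - 1), (α * β - q (Fin.castLE (Nat.sub_le n 1) i))) * δ := by
          have hl : finCongr hkn (Fin.last (n - 1)) = (⟨n - 1, by omega⟩ : Fin n) :=
            Fin.ext (by simp)
          rw [hl, hqlast, ← hδ_def]
          congr 1
  have hfac : δ * (1 - ((n:ℝ) * s₁ + (m:ℝ) * s₂))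
      = (lam - 2 * n - 2 * m + 2) * (lam - n - m + r + 4) + 8 * m := by
    have h1 : δ * (1 - ((n:ℝ) * s₁ + (m:ℝ) * s₂))
        = δ - ((n:ℝ) * (β - r) + (m:ℝ) * (α - 2)) := by
      rw [hs₁, hs₂]
      field_simp
    rw [h1, hδ_def, hα_def, hβ_def]
    linear_combination (2:ℝ) * h2m
  rw [hdetM, hdetM₀, hsplit]
  calc β ^ (m - n) * ((∏ i : Fin (n - 1), (α * β - q (Fin.castLE (Nat.sub_le n 1) i))) * δ)
        * (1 - ((n:ℝ) * s₁ + (m:ℝ) * s₂))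
      = (δ * (1 - ((n:ℝ) * s₁ + (m:ℝ) * s₂))) * β ^ (m - n)
          * (∏ i : Fin (n - 1), (α * β - q (Fin.castLE (Nat.sub_le n 1) i))) := by ring
    _ = ((lam - 2 * n - 2 * m + 2) * (lam - n - m + r + 4) + 8 * m) * β ^ (m - n)
          * (∏ i : Fin (n - 1), (α * β - q (Fin.castLE (Nat.sub_le n 1) i))) := by rw [hfac]
    _ = ((lam - 2 * n - 2 * m + 2) * (lam - n - m + r + 4) + 8 * m) * β ^ (m - n)
          * (∏ i : Fin (n - 1),
              ((lam - m - n + r + 2) * β - q (Fin.castLE (Nat.sub_le n 1) i))) := by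
        congr 1
        exact Finset.prod_congr rfl fun i _ => by rw [hα_def]; ring

end SCXYZ

namespace SCXYZ

lemma eval_det_charmatrix {W : Type*} [Fintype W] (M : Matrix W W ℝ) (x : ℝ) :
    Polynomial.eval x (Matrix.charmatrix M).det = (x • (1 : Matrix W W ℝ) - M).det := by
  have h := RingHom.map_det (Polynomial.evalRingHom x) (Matrix.charmatrix M)
  simp only [Polynomial.coe_evalRingHom] at h
  rw [h]
  congr 1
  ext i j
  by_cases hij : i = j
  · subst hij
    simp [Matrix.charmatrix_apply_eq, Matrix.one_apply]
  · simp [Matrix.charmatrix_apply_ne _ _ _ hij, Matrix.one_apply, hij]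

lemma fQ_eval_poly {W : Type*} [Fintype W] (H : SimpleGraph W) (x : ℝ) :
    fQ H x = Polynomial.eval x (Matrix.charmatrix (signlessLaplacian H)).det := by
  rw [eval_det_charmatrix]
  rfl

end SCXYZ

set_option maxHeartbeats 2000000 in
open SCXYZ Polynomial in
lemma SCXYZ.signless_main {V : Type*} [Fintype V] (G : SimpleGraph V) (r n m : ℕ)
    (hn : Fintype.card V = n) (hm : Fintype.card G.edgeSet = m)
    (hreg : G.IsRegularOfDegree r) (hr2 : 2 ≤ r) (hn0 : 0 < n)
    (q : Fin n → ℝ) (hmono : Monotone q)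
    (hlast : q ⟨n - 1, Nat.sub_lt hn0 Nat.one_pos⟩ = 2 * r)
    (hq : ∀ x : ℝ, fQ G x = ∏ i : Fin n, (x - q i)) :
    ∀ lam : ℝ,
      fQ (xyzTransform G XYZ.one XYZ.one XYZ.minus) lam =
        ((lam - 2 * n - 2 * m + 2) * (lam - n - m + r + 4) + 8 * m) *
          (lam - n - m + 4) ^ (m - n) *
          ∏ i : Fin (n - 1), ((lam - m - n + r + 2) * (lam - n - m + 4) - (q (Fin.castLE (Nat.sub_le n 1) i))) := by
  intro lam
  have h1 : ∑ v : V, G.degree v = n * r := by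
    calc ∑ v : V, G.degree v = ∑ _v : V, r := Finset.sum_congr rfl fun v _ => hreg v
      _ = n * r := by rw [Finset.sum_const, smul_eq_mul, Finset.card_univ, hn]
  have h2 : G.edgeFinset.card = m := by rw [SimpleGraph.edgeFinset, Set.toFinset_card, hm]
  have hsum := G.sum_degrees_eq_twice_card_edges
  have hnr : n * r = 2 * m := by rw [← h1, hsum, h2]
  have hmn : n ≤ m := by nlinarith
  have h2m : (n : ℝ) * r = 2 * m := by exact_mod_cast congrArg (Nat.cast (R := ℝ)) hnr
  have hq2r : ∀ i : Fin n, q i ≤ 2 * r := by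
    intro i
    rw [← hlast]
    exact hmono (by rw [Fin.le_def]; simp; omega)
  -- polynomials
  set Gt := xyzTransform G XYZ.one XYZ.one XYZ.minus with hGt
  set pR : Polynomial ℝ :=
    ((X - C (2*(n:ℝ)+2*(m:ℝ)-2)) * (X - C ((n:ℝ)+(m:ℝ)-(r:ℝ)-4)) + C (8*(m:ℝ))) *
      (X - C ((n:ℝ)+(m:ℝ)-4))^(m-n) *
      ∏ i : Fin (n-1), ((X - C ((m:ℝ)+(n:ℝ)-(r:ℝ)-2)) * (X - C ((n:ℝ)+(m:ℝ)-4))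
        - C (q (Fin.castLE (Nat.sub_le n 1) i))) with hpR
  obtain ⟨pL, hL⟩ : ∃ p : Polynomial ℝ, ∀ x : ℝ, p.eval x = fQ Gt x :=
    ⟨_, fun x => (fQ_eval_poly Gt x).symm⟩
  have hR : ∀ x : ℝ, pR.eval x =
      ((x - 2 * n - 2 * m + 2) * (x - n - m + r + 4) + 8 * m) *
        (x - n - m + 4) ^ (m - n) *
        ∏ i : Fin (n - 1), ((x - m - n + r + 2) * (x - n - m + 4)
          - (q (Fin.castLE (Nat.sub_le n 1) i))) := by
    intro x
    rw [hpR]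
    simp only [eval_mul, eval_add, eval_sub, eval_pow, eval_X, eval_C, eval_prod]
    congr 1
    · congr 1
      · ring
      · congr 1
        ring
    · exact Finset.prod_congr rfl fun i _ => by ring
  have hzero : pL - pR = 0 := by
    apply Polynomial.eq_zero_of_infinite_isRoot
    apply Set.Infinite.mono (s := Set.Ici ((n : ℝ) + m + 2*r + 1))
    · intro x hx
      have hmain := main_good G r n m hn hm hreg hmn h2m hn0 q hq2r hlast hq x hx
      simp only [Set.mem_setOf_eq, IsRoot, eval_sub, hL, hR]
      rw [← hGt] at hmain
      rw [hmain]
      ring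
    · exact Set.Ici_infinite _
  have hLR : pL = pR := sub_eq_zero.mp hzero
  rw [show fQ Gt lam = pL.eval lam from (hL lam).symm, hLR, hR lam]

theorem signless_charpoly_xyz_oom {V : Type*} [Fintype V] (G : SimpleGraph V) (r n m : ℕ)
    (hn : Fintype.card V = n) (hm : Fintype.card G.edgeSet = m)
    (hreg : G.IsRegularOfDegree r) (hr2 : 2 ≤ r) (hn0 : 0 < n)
    (q : Fin n → ℝ) (hmono : Monotone q)
    (hlast : q ⟨n - 1, by omega⟩ = 2 * r)
    (hq : ∀ x : ℝ, fQ G x = ∏ i : Fin n, (x - q i)) :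
    ∀ lam : ℝ,
      fQ (xyzTransform G XYZ.one XYZ.one XYZ.minus) lam =
        ((lam - 2 * n - 2 * m + 2) * (lam - n - m + r + 4) + 8 * m) *
          (lam - n - m + 4) ^ (m - n) *
          ∏ i : Fin (n - 1), ((lam - m - n + r + 2) * (lam - n - m + 4) - (q (Fin.castLE (Nat.sub_le n 1) i))) := by
  exact SCXYZ.signless_main G r n m hn hm hreg hr2 hn0 q hmono hlast hq
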